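/- Let n ≥ 1, let j ∈ {1,…,n}, and let v be an n-dimensional unit vector all of whose entries lie in ℤ[1/√2] = {x₀ + x₁√2 : x₀, x₁ ∈ ℤ[1/2]}. Then there exist finitely many generators G₁, …, G_ℓ, each taken from the set {(-1)_[a], X_[a,b], H_[a,b] : a, b distinct elements of {1,…,n}}, such that G₁ ⋯ G_ℓ v = e_j, the j-th standard basis vector. -/

import Mathlib

open Matrix Complex

noncomputable section

/-- The `m`-level operator of type `W` with indices `f 0, …, f (m-1)`:
for injective `f`, its `(f j', f k')` entry is `W j' k'` and it agrees
with the identity matrix elsewhere. -/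
def levelOp {n m : ℕ} (f : Fin m → Fin n) (W : Matrix (Fin m) (Fin m) ℂ) :
    Matrix (Fin n) (Fin n) ℂ := fun j k =>
  (∑ j' : Fin m, ∑ k' : Fin m, if f j' = j ∧ f k' = k then W j' k' else 0) +
  (if j = k ∧ ∀ j' : Fin m, f j' ≠ j then 1 else 0)

/-- The NOT gate `X`. -/
def Xmat : Matrix (Fin 2) (Fin 2) ℂ := !![0, 1; 1, 0]

/-- The Hadamard gate `H`. -/
def Hmat : Matrix (Fin 2) (Fin 2) ℂ := (Real.sqrt 2 : ℂ)⁻¹ • !![1, 1; 1, -1]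

/-- `G` is one of the generators `(-1)_[a]`, `X_[a,b]`, `H_[a,b]` with `a ≠ b`. -/
def IsRealGen {n : ℕ} (G : Matrix (Fin n) (Fin n) ℂ) : Prop :=
  (∃ a : Fin n, G = levelOp ![a] !![-1]) ∨
  (∃ a b : Fin n, a ≠ b ∧ G = levelOp ![a, b] Xmat) ∨
  (∃ a b : Fin n, a ≠ b ∧ G = levelOp ![a, b] Hmat)

/-- `x` is a dyadic fraction: an element of `ℤ[1/2]` (viewed inside `ℂ`). -/
def IsDyadic (x : ℂ) : Prop := ∃ (u : ℤ) (q : ℕ), x = (u : ℂ) / 2 ^ q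

/-- `x` belongs to the ring `ℤ[1/√2] = {x₀ + x₁√2 : x₀, x₁ ∈ ℤ[1/2]}`. -/
def InDSqrt2 (x : ℂ) : Prop :=
  ∃ x₀ x₁ : ℂ, IsDyadic x₀ ∧ IsDyadic x₁ ∧ x = x₀ + x₁ * Real.sqrt 2


lemma one_level_mulVec' {n : ℕ} (a : Fin n) (W : Matrix (Fin 1) (Fin 1) ℂ) (v : Fin n → ℂ) :
    (levelOp ![a] W).mulVec v = Function.update v a (W 0 0 * v a) := by
  funext i
  simp only [mulVec, dotProduct, levelOp, Fin.sum_univ_one, Matrix.cons_val_zero,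
    Fin.forall_fin_one]
  by_cases hia : i = a
  · subst hia
    simp only [Function.update_self]
    rw [Finset.sum_congr rfl (fun k _ => ?_) , Finset.sum_ite_eq Finset.univ i (fun k => W 0 0 * v k)]
    · simp
    · by_cases h : i = k <;> simp [h, eq_comm]
  · rw [Function.update_of_ne hia]
    rw [Finset.sum_congr rfl (fun k _ => ?_), Finset.sum_ite_eq Finset.univ i (fun k => v k)]
    · simp
    · have : ¬ (a = i) := fun h => hia h.symm
      by_cases h : i = k
      · subst h; simp [this]
      · simp [h, this]

lemma two_level_mulVec' {n : ℕ} (a b : Fin n) (hab : a ≠ b) (W : Matrix (Fin 2) (Fin 2) ℂ)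
    (v : Fin n → ℂ) :
    (levelOp ![a, b] W).mulVec v =
      Function.update (Function.update v a (W 0 0 * v a + W 0 1 * v b)) b
        (W 1 0 * v a + W 1 1 * v b) := by
  have hba : b ≠ a := hab.symm
  funext i
  simp only [mulVec, dotProduct, levelOp, Fin.sum_univ_two, Matrix.cons_val_zero,
    Matrix.cons_val_one, Matrix.head_cons, Fin.forall_fin_two]
  by_cases hib : i = b
  · subst hib
    rw [Function.update_self]
    trans (∑ k, ((if a = k then W 1 0 * v k else 0) + (if i = k then W 1 1 * v k else 0)))
    · refine Finset.sum_congr rfl (fun k _ => ?_)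
      by_cases h1 : a = k <;> by_cases h2 : i = k <;>
        simp_all [hab, hba] <;> ring
    · rw [Finset.sum_add_distrib, Finset.sum_ite_eq, Finset.sum_ite_eq]; simp
  · rw [Function.update_of_ne hib]
    by_cases hia : i = a
    · subst hia
      rw [Function.update_self]
      trans (∑ k, ((if i = k then W 0 0 * v k else 0) + (if b = k then W 0 1 * v k else 0)))
      · refine Finset.sum_congr rfl (fun k _ => ?_)
        by_cases h1 : i = k <;> by_cases h2 : b = k <;>
          simp_all [hab, hba] <;> ring
      · rw [Finset.sum_add_distrib, Finset.sum_ite_eq, Finset.sum_ite_eq]; simp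
    · rw [Function.update_of_ne hia]
      have h1 : ¬ a = i := fun h => hia h.symm
      have h2 : ¬ b = i := fun h => hib h.symm
      trans (∑ k, (if i = k then v k else 0))
      · refine Finset.sum_congr rfl (fun k _ => ?_)
        by_cases h : i = k
        · subst h; simp [h1, h2]
        · simp [h, h1, h2]
      · rw [Finset.sum_ite_eq]; simp

lemma int_sqrt2_eq (A B C : ℤ) (h : (A:ℝ) + B * Real.sqrt 2 = C) : A = C ∧ B = 0 := by
  by_cases hB : B = 0
  · subst hB; refine ⟨?_, rfl⟩; exact_mod_cast (by simpa using h : (A:ℝ) = C)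
  · exfalso
    have h2 : Real.sqrt 2 = ((C - A : ℤ) : ℝ) / (B : ℝ) := by
      have hB' : (B:ℝ) ≠ 0 := Int.cast_ne_zero.mpr hB
      field_simp
      push_cast
      linarith
    have h3 : Real.sqrt 2 = (((C - A : ℤ) / (B:ℤ) : ℚ) : ℝ) := by
      rw [h2]; push_cast; ring
    exact Rat.not_irrational _ (h3 ▸ irrational_sqrt_two)

lemma exists_repr {n : ℕ} (v : Fin n → ℂ) (hR : ∀ k, InDSqrt2 (v k)) :
    ∃ (q : ℕ) (a b : Fin n → ℤ), ∀ k,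
      v k = ((((a k : ℝ) + (b k : ℝ) * Real.sqrt 2) / (Real.sqrt 2) ^ q : ℝ) : ℂ) := by
  choose x₀ x₁ h₀ h₁ hx using hR
  choose u₀ p₀ h₀ using h₀
  choose u₁ p₁ h₁ using h₁
  set Q : ℕ := Finset.univ.sup (fun k => max (p₀ k) (p₁ k)) with hQ
  have hsup : ∀ k, max (p₀ k) (p₁ k) ≤ Q := fun k =>
    Finset.le_sup (f := fun k => max (p₀ k) (p₁ k)) (Finset.mem_univ k)
  have hp₀ : ∀ k, p₀ k ≤ Q := fun k => le_trans (le_max_left _ _) (hsup k)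
  have hp₁ : ∀ k, p₁ k ≤ Q := fun k => le_trans (le_max_right _ _) (hsup k)
  have key : ∀ (u : ℤ) (p : ℕ), p ≤ Q → (u:ℂ)/2^p = ((u * 2^(Q-p) : ℤ):ℂ)/2^Q := by
    intro u p hp
    push_cast
    rw [div_eq_div_iff (pow_ne_zero _ (two_ne_zero)) (pow_ne_zero _ (two_ne_zero)), mul_assoc, ← pow_add,
      Nat.sub_add_cancel hp]
  refine ⟨2*Q, fun k => u₀ k * 2^(Q - p₀ k), fun k => u₁ k * 2^(Q - p₁ k), fun k => ?_⟩
  have hs : ((Real.sqrt 2 : ℝ):ℂ)^(2*Q) = (2:ℂ)^Q := by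
    rw [pow_mul]
    norm_cast
    rw [Real.sq_sqrt (by norm_num)]
    push_cast; ring
  rw [hx k, h₀ k, h₁ k, key _ _ (hp₀ k), key _ _ (hp₁ k)]
  push_cast
  rw [hs]
  ring

lemma norm_eqs {n : ℕ} (q : ℕ) (a b : Fin n → ℤ) (v : Fin n → ℂ)
    (hrep : ∀ k, v k = ((((a k : ℝ) + (b k : ℝ) * Real.sqrt 2) / (Real.sqrt 2) ^ q : ℝ) : ℂ))
    (hunit : ∑ k, (starRingEnd ℂ) (v k) * v k = 1) :
    (∑ k, (a k ^ 2 + 2 * b k ^ 2)) = 2 ^ q ∧ (∑ k, a k * b k) = 0 := by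
  set s : ℝ := Real.sqrt 2 with hsdef
  have hs2 : s ^ 2 = 2 := Real.sq_sqrt (by norm_num)
  have hspos : 0 < s := Real.sqrt_pos.mpr (by norm_num)
  have hsum : ∑ k, (((a k : ℝ) + b k * s) / s ^ q) ^ 2 = 1 := by
    have h1 : ((∑ k, (((a k : ℝ) + b k * s) / s ^ q) ^ 2 : ℝ) : ℂ) = 1 := by
      rw [← hunit]
      push_cast
      refine Finset.sum_congr rfl (fun k _ => ?_)
      rw [hrep k, Complex.conj_ofReal]
      push_cast
      ring
    exact_mod_cast h1
  have hsum2 : ∑ k, ((a k : ℝ) + b k * s) ^ 2 = 2 ^ q := by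
    have hne : (s ^ q) ^ 2 ≠ 0 := by positivity
    have h2 : (∑ k, ((a k : ℝ) + b k * s) ^ 2) / (s ^ q) ^ 2 = 1 := by
      rw [← hsum, Finset.sum_div]
      refine Finset.sum_congr rfl (fun k _ => ?_)
      rw [div_pow]
    have h3 : (s ^ q) ^ 2 = 2 ^ q := by
      rw [← pow_mul, mul_comm, pow_mul, hs2]
    rw [div_eq_one_iff_eq hne] at h2
    rw [h2, h3]
  have hexp : ∀ k : Fin n, ((a k : ℝ) + b k * s) ^ 2 =
      ((a k ^ 2 + 2 * b k ^ 2 : ℤ) : ℝ) + ((a k * b k : ℤ) : ℝ) * 2 * s := by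
    intro k
    push_cast
    linear_combination (b k : ℝ) ^ 2 * hs2
  rw [Finset.sum_congr rfl (fun k _ => hexp k), Finset.sum_add_distrib] at hsum2
  have hsum3 : ((∑ k, (a k ^ 2 + 2 * b k ^ 2) : ℤ) : ℝ) +
      ((2 * ∑ k, a k * b k : ℤ) : ℝ) * s = ((2 ^ q : ℤ) : ℝ) := by
    have e1 : ∑ x : Fin n, ((a x * b x : ℤ):ℝ) * 2 * s
        = (∑ x : Fin n, ((a x * b x : ℤ):ℝ)) * 2 * s := by
      rw [Finset.sum_mul, Finset.sum_mul]
    rw [e1] at hsum2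
    push_cast
    push_cast at hsum2
    linarith [hsum2]
  obtain ⟨hA, hB⟩ := int_sqrt2_eq _ _ _ hsum3
  exact ⟨hA, by omega⟩

lemma sum_sq_one {n : ℕ} (a b : Fin n → ℤ)
    (hA : ∑ k, (a k ^ 2 + 2 * b k ^ 2) = 1) :
    ∃ k₀ : Fin n, (a k₀ = 1 ∨ a k₀ = -1) ∧ b k₀ = 0 ∧
      ∀ k, k ≠ k₀ → a k = 0 ∧ b k = 0 := by
  have hpos : ∀ k, 0 ≤ a k ^ 2 + 2 * b k ^ 2 := fun k => by positivity
  have hex : ∃ k₀, a k₀ ^ 2 + 2 * b k₀ ^ 2 ≠ 0 := by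
    by_contra h
    push_neg at h
    rw [Finset.sum_congr rfl (fun k _ => h k), Finset.sum_const_zero] at hA
    exact one_ne_zero hA.symm
  obtain ⟨k₀, hk₀⟩ := hex
  have hsplit : ∑ k ∈ Finset.univ.erase k₀, (a k ^ 2 + 2 * b k ^ 2) +
      (a k₀ ^ 2 + 2 * b k₀ ^ 2) = 1 := by
    rw [Finset.sum_erase_add _ _ (Finset.mem_univ k₀)]
    exact hA
  have hrest0 : ∀ k ∈ Finset.univ.erase k₀, a k ^ 2 + 2 * b k ^ 2 = 0 := by
    have h1 : 1 ≤ a k₀ ^ 2 + 2 * b k₀ ^ 2 := lt_of_le_of_ne (hpos k₀) (Ne.symm hk₀)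
    have h2 : 0 ≤ ∑ k ∈ Finset.univ.erase k₀, (a k ^ 2 + 2 * b k ^ 2) :=
      Finset.sum_nonneg (fun k _ => hpos k)
    have h3 : ∑ k ∈ Finset.univ.erase k₀, (a k ^ 2 + 2 * b k ^ 2) = 0 := by omega
    exact (Finset.sum_eq_zero_iff_of_nonneg (fun k _ => hpos k)).mp h3
  have hterm : a k₀ ^ 2 + 2 * b k₀ ^ 2 = 1 := by
    have := hrest0
    have h3 : ∑ k ∈ Finset.univ.erase k₀, (a k ^ 2 + 2 * b k ^ 2) = 0 :=
      Finset.sum_eq_zero hrest0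
    omega
  have hb : b k₀ = 0 := by nlinarith [sq_nonneg (a k₀), sq_nonneg (b k₀)]
  have ha : a k₀ = 1 ∨ a k₀ = -1 := by
    rw [← mul_self_eq_one_iff]
    nlinarith
  refine ⟨k₀, ha, hb, fun k hk => ?_⟩
  have h0 := hrest0 k (Finset.mem_erase.mpr ⟨hk, Finset.mem_univ k⟩)
  constructor <;> nlinarith [sq_nonneg (a k), sq_nonneg (b k)]

lemma move_basis {n : ℕ} (j k₀ : Fin n) (ε : ℤ) (hε : ε = 1 ∨ ε = -1)
    (v : Fin n → ℂ) (hv : v = fun k => if k = k₀ then (ε : ℂ) else 0) :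
    ∃ L : List (Matrix (Fin n) (Fin n) ℂ),
      (∀ G ∈ L, IsRealGen G) ∧
      L.prod.mulVec v = fun k => if k = j then (1 : ℂ) else 0 := by
  have e0 : Xmat 0 0 = 0 := by simp [Xmat]
  have e1 : Xmat 0 1 = 1 := by simp [Xmat]
  have e2 : Xmat 1 0 = 1 := by simp [Xmat]
  have e3 : Xmat 1 1 = 0 := by simp [Xmat]
  -- step 1: fix the sign
  have step1 : ∃ L₁ : List (Matrix (Fin n) (Fin n) ℂ),
      (∀ G ∈ L₁, IsRealGen G) ∧
      L₁.prod.mulVec v = fun k => if k = k₀ then (1 : ℂ) else 0 := by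
    rcases hε with hε | hε
    · exact ⟨[], by simp, by simp [Matrix.one_mulVec, hv, hε]⟩
    · refine ⟨[levelOp ![k₀] !![-1]], ?_, ?_⟩
      · intro G hG
        simp at hG
        exact Or.inl ⟨k₀, hG⟩
      · rw [List.prod_singleton, one_level_mulVec']
        funext k
        by_cases hk : k = k₀
        · subst hk
          simp [hv, hε]
        · simp [Function.update_of_ne hk, hv, hk]
  obtain ⟨L₁, hL₁g, hL₁⟩ := step1
  by_cases hk₀j : k₀ = j
  · exact ⟨L₁, hL₁g, by rw [hL₁, hk₀j]⟩
  · have hjk : j ≠ k₀ := fun h => hk₀j h.symm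
    refine ⟨levelOp ![j, k₀] Xmat :: L₁, ?_, ?_⟩
    · intro G hG
      rcases List.mem_cons.mp hG with h | h
      · exact Or.inr (Or.inl ⟨j, k₀, hjk, h⟩)
      · exact hL₁g G h
    · rw [List.prod_cons, ← Matrix.mulVec_mulVec, hL₁, two_level_mulVec' j k₀ hjk]
      funext k
      by_cases hk : k = k₀
      · subst hk
        simp [e2, e3, hjk, hk₀j, Function.update_self]
      · rw [Function.update_of_ne hk]
        by_cases hkj : k = j
        · subst hkj
          simp [e0, e1, hjk]
        · simp [Function.update_of_ne hkj, hk, hkj]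

lemma sum_conj_update {n : ℕ} (v : Fin n → ℂ) (k₁ k₂ : Fin n) (h12 : k₁ ≠ k₂) (x y : ℂ)
    (hxy : (starRingEnd ℂ) x * x + (starRingEnd ℂ) y * y =
      (starRingEnd ℂ) (v k₁) * v k₁ + (starRingEnd ℂ) (v k₂) * v k₂) :
    ∑ k, (starRingEnd ℂ) ((Function.update (Function.update v k₁ x) k₂ y) k) *
        (Function.update (Function.update v k₁ x) k₂ y) k
      = ∑ k, (starRingEnd ℂ) (v k) * v k := by
  classical
  set φ : ℂ → ℂ := fun z => (starRingEnd ℂ) z * z with hφ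
  have hcomp : ∀ (g : Fin n → ℂ) (i : Fin n) (c : ℂ),
      (fun k => φ (Function.update g i c k)) = Function.update (fun k => φ (g k)) i (φ c) := by
    intro g i c
    funext k
    by_cases hk : k = i
    · subst hk; simp
    · simp [Function.update_of_ne hk]
  have hk₁mem : k₁ ∈ Finset.univ \ {k₂} := by
    simp [Finset.mem_sdiff, h12]
  have lhs : ∑ k, φ ((Function.update (Function.update v k₁ x) k₂ y) k)
      = φ y + (φ x + ∑ k ∈ (Finset.univ \ {k₂}) \ {k₁}, φ (v k)) := by
    rw [show (fun k => φ ((Function.update (Function.update v k₁ x) k₂ y) k))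
        = Function.update (fun k => φ ((Function.update v k₁ x) k)) k₂ (φ y) from
        hcomp _ _ _]
    rw [Finset.sum_update_of_mem (Finset.mem_univ k₂)]
    congr 1
    rw [show (fun k => φ ((Function.update v k₁ x) k))
        = Function.update (fun k => φ (v k)) k₁ (φ x) from hcomp _ _ _]
    rw [Finset.sum_update_of_mem hk₁mem]
  have rhs : ∑ k, φ (v k)
      = φ (v k₂) + (φ (v k₁) + ∑ k ∈ (Finset.univ \ {k₂}) \ {k₁}, φ (v k)) := by
    rw [Finset.sum_eq_sum_sdiff_singleton_add (Finset.mem_univ k₂) (fun k => φ (v k)),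
      Finset.sum_eq_sum_sdiff_singleton_add hk₁mem (fun k => φ (v k))]
    ring
  show ∑ k, φ _ = ∑ k, φ (v k)
  rw [lhs, rhs]
  have : φ x + φ y = φ (v k₁) + φ (v k₂) := hxy
  ring_nf
  linear_combination this

lemma base0 {n : ℕ} (j : Fin n) (a b : Fin n → ℤ) (v : Fin n → ℂ)
    (hrep : ∀ k, v k = ((((a k : ℝ) + (b k : ℝ) * Real.sqrt 2) / (Real.sqrt 2) ^ 0 : ℝ) : ℂ))
    (hunit : ∑ k, (starRingEnd ℂ) (v k) * v k = 1) :
    ∃ L : List (Matrix (Fin n) (Fin n) ℂ),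
      (∀ G ∈ L, IsRealGen G) ∧
      L.prod.mulVec v = fun k => if k = j then (1 : ℂ) else 0 := by
  obtain ⟨hA, -⟩ := norm_eqs 0 a b v hrep hunit
  rw [pow_zero] at hA
  obtain ⟨k₀, hε, hb₀, hrest⟩ := sum_sq_one a b hA
  have hv : v = fun k => if k = k₀ then ((a k₀ : ℤ) : ℂ) else 0 := by
    funext k
    by_cases hk : k = k₀
    · subst hk
      rw [hrep k, hb₀]
      push_cast
      simp
    · obtain ⟨ha0, hb0⟩ := hrest k hk
      rw [hrep k, ha0, hb0]
      simp [hk]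
  exact move_basis j k₀ (a k₀) hε v hv

lemma int_even_sum_iff {ι : Type*} [DecidableEq ι] (s : Finset ι) (f : ι → ℤ) :
    Even (∑ i ∈ s, f i) ↔ Even (s.filter fun x => Odd (f x)).card := by
  induction s using Finset.induction_on with
  | empty => simp
  | @insert c s hc ih =>
    rw [Finset.sum_insert hc, Int.even_add, Finset.filter_insert]
    by_cases hfc : Odd (f c)
    · rw [if_pos hfc, Finset.card_insert_of_notMem (fun h => hc (Finset.mem_filter.mp h).1),
        Nat.even_add_one]
      have : ¬ Even (f c) := Int.not_even_iff_odd.mpr hfc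
      tauto
    · rw [if_neg hfc]
      have : Even (f c) := Int.not_odd_iff_even.mp hfc
      tauto

lemma hstep_plus (q : ℕ) (A₁ B₁ A₂ B₂ c : ℤ) (hc : A₁ + A₂ = 2 * c) :
    (Real.sqrt 2)⁻¹ * (((A₁ : ℝ) + B₁ * Real.sqrt 2) / (Real.sqrt 2) ^ (q+1))
      + (Real.sqrt 2)⁻¹ * (((A₂ : ℝ) + B₂ * Real.sqrt 2) / (Real.sqrt 2) ^ (q+1))
    = (((B₁ + B₂ : ℤ) : ℝ) + (c : ℝ) * Real.sqrt 2) / (Real.sqrt 2) ^ (q+1) := by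
  have hs2 : (Real.sqrt 2) ^ 2 = 2 := Real.sq_sqrt (by norm_num)
  have hs0 : Real.sqrt 2 ≠ 0 := ne_of_gt (Real.sqrt_pos.mpr (by norm_num))
  have hc' : (A₁ : ℝ) + A₂ = 2 * c := by exact_mod_cast congrArg (fun z : ℤ => (z : ℝ)) hc
  have hpow : (Real.sqrt 2) ^ (q+1) ≠ 0 := pow_ne_zero _ hs0
  have h1 : (Real.sqrt 2)⁻¹ * Real.sqrt 2 = 1 := inv_mul_cancel₀ hs0
  have h2 : 2 * (Real.sqrt 2)⁻¹ = Real.sqrt 2 := by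
    rw [← hs2]
    field_simp
    rw [Real.sqrt_sq (Real.sqrt_nonneg 2)]
  have step : (Real.sqrt 2)⁻¹ * (((A₁ : ℝ) + B₁ * Real.sqrt 2) / (Real.sqrt 2) ^ (q+1))
      + (Real.sqrt 2)⁻¹ * (((A₂ : ℝ) + B₂ * Real.sqrt 2) / (Real.sqrt 2) ^ (q+1))
      = ((Real.sqrt 2)⁻¹ * (((A₁:ℝ)+A₂) + ((B₁:ℝ)+B₂) * Real.sqrt 2)) / (Real.sqrt 2) ^ (q+1) := by
    ring
  rw [step, div_eq_div_iff hpow hpow]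
  have goal1 : (Real.sqrt 2)⁻¹ * (((A₁:ℝ)+A₂) + ((B₁:ℝ)+B₂) * Real.sqrt 2)
      = ((B₁ + B₂ : ℤ) : ℝ) + (c : ℝ) * Real.sqrt 2 := by
    rw [hc']
    push_cast
    linear_combination (c:ℝ) * h2 + ((B₁:ℝ)+B₂) * h1
  rw [goal1]

lemma hstep_minus (q : ℕ) (A₁ B₁ A₂ B₂ c : ℤ) (hc : A₁ - A₂ = 2 * c) :
    (Real.sqrt 2)⁻¹ * (((A₁ : ℝ) + B₁ * Real.sqrt 2) / (Real.sqrt 2) ^ (q+1))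
      - (Real.sqrt 2)⁻¹ * (((A₂ : ℝ) + B₂ * Real.sqrt 2) / (Real.sqrt 2) ^ (q+1))
    = (((B₁ - B₂ : ℤ) : ℝ) + (c : ℝ) * Real.sqrt 2) / (Real.sqrt 2) ^ (q+1) := by
  have h := hstep_plus q A₁ B₁ (-A₂) (-B₂) c (by omega)
  push_cast at h ⊢
  linear_combination h

lemma key {n : ℕ} (j : Fin n) :
    ∀ N q : ℕ, ∀ (a b : Fin n → ℤ) (v : Fin n → ℂ),
      (∀ k, v k = ((((a k : ℝ) + (b k : ℝ) * Real.sqrt 2) / (Real.sqrt 2) ^ q : ℝ) : ℂ)) →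
      (∑ k, (starRingEnd ℂ) (v k) * v k = 1) →
      q * (n + 1) + (Finset.univ.filter (fun k => Odd (a k))).card ≤ N →
      ∃ L : List (Matrix (Fin n) (Fin n) ℂ),
        (∀ G ∈ L, IsRealGen G) ∧
        L.prod.mulVec v = fun k => if k = j then (1 : ℂ) else 0 := by
  intro N
  induction N with
  | zero =>
    intro q a b v hrep hu hN
    have hq : q = 0 := by
      have h0 : q * (n + 1) = 0 := by omega
      rcases Nat.mul_eq_zero.mp h0 with h | h
      · exact h
      · exact absurd h (Nat.succ_ne_zero n)
    subst hq
    exact base0 j a b v hrep hu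
  | succ N ih =>
    intro q a b v hrep hu hN
    match q with
    | 0 => exact base0 j a b v hrep hu
    | (q+1) =>
      obtain ⟨hA, hB⟩ := norm_eqs (q+1) a b v hrep hu
      have hs2 : (Real.sqrt 2 : ℝ) ^ 2 = 2 := Real.sq_sqrt (by norm_num)
      have hs0 : (Real.sqrt 2 : ℝ) ≠ 0 := ne_of_gt (Real.sqrt_pos.mpr (by norm_num))
      by_cases hm : (Finset.univ.filter (fun k => Odd (a k))).card = 0
      · -- all `a k` even : reduce the exponent
        have hae : ∀ k, Even (a k) := by
          intro k
          by_contra hodd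
          have hk : k ∈ Finset.univ.filter (fun k => Odd (a k)) := by
            simp [Finset.mem_filter, Int.not_even_iff_odd.mp hodd]
          rw [Finset.card_eq_zero] at hm
          rw [hm] at hk
          exact absurd hk (Finset.notMem_empty k)
        have hae2 : ∀ k, ∃ c, a k = 2 * c := by
          intro k
          obtain ⟨c, hc⟩ := hae k
          exact ⟨c, by omega⟩
        choose c hc using hae2
        have hrep' : ∀ k, v k =
            ((((b k : ℝ) + (c k : ℝ) * Real.sqrt 2) / (Real.sqrt 2) ^ q : ℝ) : ℂ) := by
          intro k
          rw [hrep k]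
          congr 1
          rw [div_eq_div_iff (pow_ne_zero _ hs0) (pow_ne_zero _ hs0)]
          have hck : (a k : ℝ) = 2 * c k := by exact_mod_cast congrArg (fun z : ℤ => (z:ℝ)) (hc k)
          rw [pow_succ]
          linear_combination (Real.sqrt 2) ^ q * hck - ((c k : ℝ)) * (Real.sqrt 2) ^ q * hs2
        refine ih q b c v hrep' hu ?_
        have hcard : (Finset.univ.filter (fun k => Odd (b k))).card ≤ n := by
          refine le_trans (Finset.card_filter_le _ _) ?_
          simp
        have hexp : (q+1) * (n+1) = q * (n+1) + (n+1) := by ring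
        rw [hexp] at hN
        omega
      · -- there are odd entries : use a Hadamard step
        set S := Finset.univ.filter (fun k => Odd (a k)) with hS
        have hEsum : Even (∑ k, a k ^ 2) := by
          have h2 : ∑ k, a k ^ 2 = 2 ^ (q+1) - 2 * ∑ k, b k ^ 2 := by
            rw [← hA, Finset.sum_add_distrib, Finset.mul_sum]
            ring
          rw [h2]
          exact ⟨2 ^ q - ∑ k, b k ^ 2, by rw [pow_succ]; ring⟩
        have hScard : Even S.card := by
          have h1 := (int_even_sum_iff Finset.univ (fun k => a k ^ 2)).mp hEsum
          have h2 : Finset.univ.filter (fun k => Odd (a k ^ 2)) = S := by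
            refine Finset.filter_congr (fun k _ => ?_)
            simp [Int.odd_pow]
          rwa [h2] at h1
        have hOO : Even (S.filter (fun k => Odd (b k))).card := by
          have h0 : Even (∑ k, a k * b k) := by rw [hB]; exact Even.zero
          have h1 := (int_even_sum_iff Finset.univ (fun k => a k * b k)).mp h0
          have h2 : Finset.univ.filter (fun k => Odd (a k * b k))
              = S.filter (fun k => Odd (b k)) := by
            rw [hS, Finset.filter_filter]
            refine Finset.filter_congr (fun k _ => ?_)
            simp [Int.odd_mul]
          rwa [h2] at h1
        have hsplitc : (S.filter (fun k => Odd (b k))).card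
            + (S.filter (fun k => ¬ Odd (b k))).card = S.card :=
          Finset.card_filter_add_card_filter_not (fun k => Odd (b k))
        have hpair : ∃ k₁ k₂ : Fin n, k₁ ≠ k₂ ∧ k₁ ∈ S ∧ k₂ ∈ S ∧ b k₁ % 2 = b k₂ % 2 := by
          have h2 : 1 < (S.filter (fun k => Odd (b k))).card ∨
              1 < (S.filter (fun k => ¬ Odd (b k))).card := by
            rw [Nat.even_iff] at hScard hOO
            have hOE : Even (S.filter (fun k => ¬ Odd (b k))).card := by
              rw [Nat.even_iff]; omega
            rw [Nat.even_iff] at hOE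
            omega
          rcases h2 with h2 | h2
          · obtain ⟨k₁, hk₁, k₂, hk₂, hne⟩ := Finset.one_lt_card.mp h2
            obtain ⟨hk₁S, hk₁b⟩ := Finset.mem_filter.mp hk₁
            obtain ⟨hk₂S, hk₂b⟩ := Finset.mem_filter.mp hk₂
            exact ⟨k₁, k₂, hne, hk₁S, hk₂S, by
              rw [Int.odd_iff.mp hk₁b, Int.odd_iff.mp hk₂b]⟩
          · obtain ⟨k₁, hk₁, k₂, hk₂, hne⟩ := Finset.one_lt_card.mp h2
            obtain ⟨hk₁S, hk₁b⟩ := Finset.mem_filter.mp hk₁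
            obtain ⟨hk₂S, hk₂b⟩ := Finset.mem_filter.mp hk₂
            rw [Int.not_odd_iff_even, Int.even_iff] at hk₁b hk₂b
            exact ⟨k₁, k₂, hne, hk₁S, hk₂S, by rw [hk₁b, hk₂b]⟩
        obtain ⟨k₁, k₂, h12, hk₁S, hk₂S, hbpar⟩ := hpair
        have ha₁ : a k₁ % 2 = 1 := Int.odd_iff.mp (Finset.mem_filter.mp hk₁S).2
        have ha₂ : a k₂ % 2 = 1 := Int.odd_iff.mp (Finset.mem_filter.mp hk₂S).2
        obtain ⟨cp, hcp⟩ : ∃ c, a k₁ + a k₂ = 2 * c := ⟨(a k₁ + a k₂) / 2, by omega⟩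
        obtain ⟨cm, hcm⟩ : ∃ c, a k₁ - a k₂ = 2 * c := ⟨(a k₁ - a k₂) / 2, by omega⟩
        set a' : Fin n → ℤ :=
          Function.update (Function.update a k₁ (b k₁ + b k₂)) k₂ (b k₁ - b k₂) with ha'
        set b' : Fin n → ℤ := Function.update (Function.update b k₁ cp) k₂ cm with hb'
        set G : Matrix (Fin n) (Fin n) ℂ := levelOp ![k₁, k₂] Hmat with hG
        set x : ℂ := (Real.sqrt 2 : ℂ)⁻¹ * v k₁ + (Real.sqrt 2 : ℂ)⁻¹ * v k₂ with hxdef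
        set y : ℂ := (Real.sqrt 2 : ℂ)⁻¹ * v k₁ - (Real.sqrt 2 : ℂ)⁻¹ * v k₂ with hydef
        have hw : G.mulVec v = Function.update (Function.update v k₁ x) k₂ y := by
          rw [hG, two_level_mulVec' k₁ k₂ h12 Hmat v]
          have e00 : Hmat 0 0 = (Real.sqrt 2 : ℂ)⁻¹ := by simp [Hmat]
          have e01 : Hmat 0 1 = (Real.sqrt 2 : ℂ)⁻¹ := by simp [Hmat]
          have e10 : Hmat 1 0 = (Real.sqrt 2 : ℂ)⁻¹ := by simp [Hmat]
          have e11 : Hmat 1 1 = -(Real.sqrt 2 : ℂ)⁻¹ := by simp [Hmat]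
          rw [e00, e01, e10, e11, hxdef, hydef]
          ring_nf
        have hx : x = (((((b k₁ + b k₂ : ℤ) : ℝ) + (cp : ℝ) * Real.sqrt 2)
            / (Real.sqrt 2) ^ (q+1) : ℝ) : ℂ) := by
          rw [hxdef, hrep k₁, hrep k₂, ← Complex.ofReal_inv, ← Complex.ofReal_mul,
            ← Complex.ofReal_mul, ← Complex.ofReal_add]
          exact congrArg _ (hstep_plus q (a k₁) (b k₁) (a k₂) (b k₂) cp hcp)
        have hy : y = (((((b k₁ - b k₂ : ℤ) : ℝ) + (cm : ℝ) * Real.sqrt 2)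
            / (Real.sqrt 2) ^ (q+1) : ℝ) : ℂ) := by
          rw [hydef, hrep k₁, hrep k₂, ← Complex.ofReal_inv, ← Complex.ofReal_mul,
            ← Complex.ofReal_mul, ← Complex.ofReal_sub]
          exact congrArg _ (hstep_minus q (a k₁) (b k₁) (a k₂) (b k₂) cm hcm)
        have hrep'' : ∀ k, (G.mulVec v) k =
            ((((a' k : ℝ) + (b' k : ℝ) * Real.sqrt 2) / (Real.sqrt 2) ^ (q+1) : ℝ) : ℂ) := by
          intro k
          rw [hw]
          by_cases hk2 : k = k₂
          · subst hk2
            rw [Function.update_self, hy, ha', hb']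
            rw [Function.update_self, Function.update_self]
          · rw [Function.update_of_ne hk2]
            by_cases hk1 : k = k₁
            · subst hk1
              rw [Function.update_self, hx, ha', hb']
              rw [Function.update_of_ne (fun h => h12 h), Function.update_self,
                Function.update_of_ne (fun h => h12 h), Function.update_self]
            · rw [Function.update_of_ne hk1, hrep k, ha', hb',
                Function.update_of_ne hk2, Function.update_of_ne hk1,
                Function.update_of_ne hk2, Function.update_of_ne hk1]
        have hcv : ∀ k, (starRingEnd ℂ) (v k) = v k := fun k => by
          rw [hrep k]; exact Complex.conj_ofReal _
        have hu' : ∑ k, (starRingEnd ℂ) ((G.mulVec v) k) * (G.mulVec v) k = 1 := by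
          rw [hw]
          rw [sum_conj_update v k₁ k₂ h12 x y ?_]
          · exact hu
          · have hi : (2 : ℂ) * ((Real.sqrt 2 : ℂ)⁻¹ * (Real.sqrt 2 : ℂ)⁻¹) = 1 := by
              rw [← mul_inv]
              rw [← Complex.ofReal_mul]
              norm_cast
              rw [← Real.sqrt_mul_self (le_of_lt two_pos)] at hs2 ⊢
              field_simp
              rw [Real.sq_sqrt (Real.sqrt_nonneg _)]
            simp only [hxdef, hydef, map_add, map_sub, _root_.map_mul, map_inv₀,
              Complex.conj_ofReal, hcv]
            linear_combination (v k₁ * v k₁ + v k₂ * v k₂) * hi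
        have hsub : Finset.univ.filter (fun k => Odd (a' k)) ⊆ S.erase k₁ := by
          intro k hk
          have hka : Odd (a' k) := (Finset.mem_filter.mp hk).2
          by_cases hk2 : k = k₂
          · exfalso
            subst hk2
            rw [ha', Function.update_self, Int.odd_iff] at hka
            omega
          · by_cases hk1 : k = k₁
            · exfalso
              subst hk1
              rw [ha', Function.update_of_ne (fun h => h12 h), Function.update_self,
                Int.odd_iff] at hka
              omega
            · refine Finset.mem_erase.mpr ⟨hk1, ?_⟩
              rw [ha', Function.update_of_ne hk2, Function.update_of_ne hk1] at hka
              exact Finset.mem_filter.mpr ⟨Finset.mem_univ k, hka⟩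
        have hcard : (Finset.univ.filter (fun k => Odd (a' k))).card < S.card := by
          refine lt_of_le_of_lt (Finset.card_le_card hsub) ?_
          rw [Finset.card_erase_of_mem hk₁S]
          omega
        obtain ⟨L', hg', hact⟩ := ih (q+1) a' b' (G.mulVec v) hrep'' hu' (by
          generalize hP : (q+1) * (n+1) = P at hN ⊢
          omega)
        refine ⟨L' ++ [G], ?_, ?_⟩
        · intro G' hG'
          rcases List.mem_append.mp hG' with h | h
          · exact hg' G' h
          · rw [List.mem_singleton] at h
            subst h
            exact Or.inr (Or.inr ⟨k₁, k₂, h12, hG⟩)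
        · rw [List.prod_append, List.prod_singleton, ← Matrix.mulVec_mulVec]
          exact hact

/-- Every unit vector over `ℤ[1/√2]` can be reduced to any standard basis
vector `e_j` by generators `(-1)_[a]`, `X_[a,b]`, `H_[a,b]`. -/
theorem stmt14 (n : ℕ) (hn : 1 ≤ n) (j : Fin n) (v : Fin n → ℂ)
    (hunit : ∑ k, (starRingEnd ℂ) (v k) * v k = 1)
    (hR : ∀ k, InDSqrt2 (v k)) :
    ∃ L : List (Matrix (Fin n) (Fin n) ℂ),
      (∀ G ∈ L, IsRealGen G) ∧
      L.prod.mulVec v = fun k => if k = j then (1 : ℂ) else 0 := by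
  obtain ⟨q, a, b, hrep⟩ := exists_repr v hR
  exact key j (q * (n + 1) + (Finset.univ.filter (fun k => Odd (a k))).card) q a b v hrep
    hunit le_rfl
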